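/- Let H ≥ 1 and α_t = (H+1)/(H+t), with α_i^t = α_i · ∏_{j=i+1}^t (1-α_j). Then for every t ≥ 1, ∑_{i=1}^t α_i^t / √i ≤ 2/√t. -/

import Mathlib

/-- For `H ≥ 1`, `α t = (H+1)/(H+t)`, and `α_i^t = α i * ∏_{j=i+1}^t (1 - α j)`,
we have `∑_{i=1}^t α_i^t / √i ≤ 2/√t` for every `t ≥ 1`. -/
theorem sum_lr_weights_div_sqrt_le (H : ℕ) (hH : 1 ≤ H)
    (α : ℕ → ℝ) (hα : ∀ t, α t = ((H : ℝ) + 1) / ((H : ℝ) + t))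
    (w : ℕ → ℕ → ℝ)
    (hw : ∀ i t, w i t = α i * ∏ j ∈ Finset.Icc (i + 1) t, (1 - α j)) :
    ∀ t, 1 ≤ t →
      ∑ i ∈ Finset.Icc 1 t, w i t / Real.sqrt i ≤ 2 / Real.sqrt t := by
  intro t ht
  induction t, ht using Nat.le_induction with
  | base =>
    have h1 : w 1 1 = 1 := by
      rw [hw, hα]; simp; exact (by positivity : ((H:ℝ)+1) ≠ 0)
    simp [h1]
  | succ n hn ih =>
    have hsplit :
        ∑ i ∈ Finset.Icc 1 (n+1), w i (n+1) / Real.sqrt i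
          = (1 - α (n+1)) * ∑ i ∈ Finset.Icc 1 n, w i n / Real.sqrt i
            + α (n+1) / Real.sqrt (n+1) := by
      rw [Finset.sum_Icc_succ_top (by omega : 1 ≤ n+1)]
      have hw' : ∀ i ∈ Finset.Icc 1 n, w i (n+1) / Real.sqrt i
          = (1 - α (n+1)) * (w i n / Real.sqrt i) := by
        intro i hi
        simp only [Finset.mem_Icc] at hi
        rw [hw, hw, Finset.prod_Icc_succ_top (by omega : i + 1 ≤ n + 1)]
        ring
      rw [Finset.sum_congr rfl hw', ← Finset.mul_sum, hw]
      simp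
    rw [hsplit]
    push_cast
    have hHpos : (0:ℝ) < (H:ℝ) := by exact_mod_cast hH
    have hn1 : (1:ℝ) ≤ (n:ℝ) := by exact_mod_cast hn
    have hnpos : (0:ℝ) < (n:ℝ) := by linarith
    have hαle : α (n+1) ≤ 1 := by
      rw [hα]
      rw [div_le_one (by push_cast; positivity)]
      push_cast; linarith
    have hs : (0:ℝ) < Real.sqrt n := Real.sqrt_pos.mpr hnpos
    have hu : (0:ℝ) < Real.sqrt ((n:ℝ)+1) := Real.sqrt_pos.mpr (by positivity)
    have hstep : (1 - α (n+1)) * (2 / Real.sqrt n) + α (n+1) / Real.sqrt ((n:ℝ)+1)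
        ≤ 2 / Real.sqrt ((n:ℝ)+1) := by
      rw [hα]
      push_cast
      set s := Real.sqrt n with hsdef
      set u := Real.sqrt ((n:ℝ)+1) with hudef
      have hs2 : s^2 = n := Real.sq_sqrt hnpos.le
      have hu2 : u^2 = (n:ℝ)+1 := Real.sq_sqrt (by positivity)
      have hd : (0:ℝ) < (H:ℝ) + ((n:ℝ)+1) := by positivity
      have ha : 1 - ((H:ℝ)+1)/((H:ℝ)+((n:ℝ)+1)) = (n:ℝ)/((H:ℝ)+((n:ℝ)+1)) := by
        field_simp
        ring
      rw [ha, div_mul_div_comm, div_div,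
        div_add_div _ _ (by positivity) (by positivity),
        div_le_div_iff₀ (by positivity) hu]
      have hprod : ((2*(n:ℝ)+1)*s - 2*n*u) * ((2*(n:ℝ)+1)*s + 2*n*u) = (n:ℝ) := by
        linear_combination (2*(n:ℝ)+1)^2 * hs2 - 4*(n:ℝ)^2 * hu2
      have hsum : (0:ℝ) < (2*(n:ℝ)+1)*s + 2*n*u := by positivity
      have h2 : 2*(n:ℝ)*u ≤ (2*(n:ℝ)+1)*s := by nlinarith [hprod, hsum]
      have key : 2*(n:ℝ)*u + ((H:ℝ)+1)*s ≤ 2*((H:ℝ)+((n:ℝ)+1))*s := by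
        nlinarith [h2, mul_nonneg hHpos.le hs.le]
      nlinarith [mul_le_mul_of_nonneg_left key (le_of_lt (mul_pos hd hu)),
        mul_pos hs hu, mul_pos hd hu, mul_pos hd hs]
    calc (1 - α (n+1)) * ∑ i ∈ Finset.Icc 1 n, w i n / Real.sqrt i
          + α (n+1) / Real.sqrt ((n:ℝ)+1)
        ≤ (1 - α (n+1)) * (2 / Real.sqrt n) + α (n+1) / Real.sqrt ((n:ℝ)+1) := by
          gcongr
        _ ≤ 2 / Real.sqrt ((n:ℝ)+1) := hstep
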